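/- Let n ≥ 3, let x : Fin n → ℝ with S_1(x) ≥ 0 and S_2(x) ≥ 0, and let c ≥ 0 be a real number. Then S_1(x)·S_2(x) − 3·S_3(x) + c·(n−1)·S_1(x) ≥ (2/n)·S_1(x)·(S_2(x) + n(n−1)c/2). -/

import Mathlib

open Finset

/-- The `r`-th elementary symmetric polynomial of `x : Fin n → ℝ`:
`S_r(x) = Σ_{i_1 < ⋯ < i_r} x(i_1) ⋯ x(i_r)`. -/
noncomputable def esymm (n r : ℕ) (x : Fin n → ℝ) : ℝ :=
  ∑ s ∈ Finset.univ.powersetCard r, ∏ i ∈ s, x i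

private lemma esymm_rec {n : ℕ} (x : Fin n → ℝ) (r : ℕ) {a : Fin n} {s : Finset (Fin n)}
    (ha : a ∉ s) :
    ∑ t ∈ (insert a s).powersetCard (r + 1), ∏ i ∈ t, x i
      = (∑ t ∈ s.powersetCard (r + 1), ∏ i ∈ t, x i)
        + x a * ∑ t ∈ s.powersetCard r, ∏ i ∈ t, x i := by
  rw [Finset.powersetCard_succ_insert ha, Finset.sum_union, Finset.sum_image, Finset.mul_sum]
  · congr 1
    refine Finset.sum_congr rfl fun t ht => ?_
    have hat : a ∉ t := fun h => ha ((Finset.mem_powersetCard.mp ht).1 h)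
    rw [Finset.prod_insert hat]
  · intro t ht u hu h
    have hat : a ∉ t := fun h' => ha ((Finset.mem_powersetCard.mp ht).1 h')
    have hau : a ∉ u := fun h' => ha ((Finset.mem_powersetCard.mp hu).1 h')
    rw [← Finset.erase_insert hat, ← Finset.erase_insert hau, h]
  · rw [Finset.disjoint_left]
    intro t ht ht'
    obtain ⟨u, hu, rfl⟩ := Finset.mem_image.mp ht'
    exact ha ((Finset.mem_powersetCard.mp ht).1 (Finset.mem_insert_self a u))

private lemma esymm_one {n : ℕ} (x : Fin n → ℝ) (s : Finset (Fin n)) :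
    ∑ t ∈ s.powersetCard 1, ∏ i ∈ t, x i = ∑ i ∈ s, x i := by
  classical
  induction s using Finset.induction_on with
  | empty => rw [Finset.powersetCard_eq_empty.mpr (by simp)]; simp
  | insert a s ha ih =>
    rw [esymm_rec x 0 ha, ih, Finset.sum_insert ha]
    simp [Finset.powersetCard_zero]
    ring

private lemma esymm_two {n : ℕ} (x : Fin n → ℝ) (s : Finset (Fin n)) :
    2 * ∑ t ∈ s.powersetCard 2, ∏ i ∈ t, x i
      = (∑ i ∈ s, x i) ^ 2 - ∑ i ∈ s, (x i) ^ 2 := by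
  classical
  induction s using Finset.induction_on with
  | empty => rw [Finset.powersetCard_eq_empty.mpr (by simp)]; simp
  | @insert a s ha ih =>
    rw [show (2:ℕ) = 1 + 1 from rfl, esymm_rec x 1 ha, esymm_one,
      Finset.sum_insert ha, Finset.sum_insert ha]
    have := ih
    rw [show (1:ℕ)+1 = 2 from rfl] at *
    nlinarith [ih]

private lemma esymm_three {n : ℕ} (x : Fin n → ℝ) (s : Finset (Fin n)) :
    6 * ∑ t ∈ s.powersetCard 3, ∏ i ∈ t, x i
      = (∑ i ∈ s, x i) ^ 3 - 3 * (∑ i ∈ s, x i) * (∑ i ∈ s, (x i) ^ 2)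
        + 2 * ∑ i ∈ s, (x i) ^ 3 := by
  classical
  induction s using Finset.induction_on with
  | empty => rw [Finset.powersetCard_eq_empty.mpr (by simp)]; simp
  | @insert a s ha ih =>
    have h2 := esymm_two x s
    rw [show (3:ℕ) = 2 + 1 from rfl, esymm_rec x 2 ha,
      Finset.sum_insert ha, Finset.sum_insert ha, Finset.sum_insert ha]
    rw [show (2:ℕ)+1 = 3 from rfl]
    linear_combination ih + 3 * x a * h2

private lemma cubic_key (n : ℕ) (hn : 3 ≤ n) (y : Fin n → ℝ) (m : ℝ) (hm : 0 ≤ m)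
    (h0 : ∑ i, y i = 0) (hq : ∑ i, (y i) ^ 2 ≤ (n : ℝ) * ((n : ℝ) - 1) * m ^ 2) :
    ∑ i, (y i) ^ 3 ≤ ((n : ℝ) - 2) * m * ∑ i, (y i) ^ 2 := by
  have hN : (3 : ℝ) ≤ (n : ℝ) := by exact_mod_cast hn
  have hN0 : (0 : ℝ) < n := by linarith
  set N : ℝ := (n : ℝ) with hNdef
  set q : ℝ := ∑ i, (y i) ^ 2 with hqdef
  set r : ℝ := ∑ i, (y i) ^ 3 with hrdef
  have hq0 : 0 ≤ q := Finset.sum_nonneg fun i _ => sq_nonneg _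
  obtain ⟨j, -, hj⟩ := Finset.exists_max_image Finset.univ y ⟨⟨0, by omega⟩, Finset.mem_univ _⟩
  set M : ℝ := y j with hMdef
  have hjle : ∀ i, y i ≤ M := fun i => hj i (Finset.mem_univ i)
  have hM0 : 0 ≤ M := by
    by_contra h
    push_neg at h
    have : ∑ i, y i ≤ ∑ _i : Fin n, M := Finset.sum_le_sum fun i _ => hjle i
    rw [h0, Finset.sum_const, Finset.card_univ, Fintype.card_fin, nsmul_eq_mul] at this
    have h2 := mul_pos hN0 (neg_pos.mpr h)
    nlinarith [this, h2]
  -- Cauchy–Schwarz on the complement of j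
  have hqM : N * M ^ 2 ≤ (N - 1) * q := by
    have h1 : ∑ i ∈ Finset.univ.erase j, y i = -M := by
      rw [Finset.sum_erase_eq_sub (Finset.mem_univ j), h0]; ring
    have h2 : ∑ i ∈ Finset.univ.erase j, (y i) ^ 2 = q - M ^ 2 := by
      rw [Finset.sum_erase_eq_sub (Finset.mem_univ j)]
    have hcs := Finset.sum_mul_sq_le_sq_mul_sq (Finset.univ.erase j) (fun _ => (1:ℝ)) y
    simp only [one_mul, one_pow] at hcs
    rw [h1, h2, Finset.sum_const, Finset.card_erase_of_mem (Finset.mem_univ j),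
      Finset.card_univ, Fintype.card_fin, nsmul_eq_mul] at hcs
    have hcast : ((n - 1 : ℕ) : ℝ) = N - 1 := by
      rw [Nat.cast_sub (by omega)]; simp [hNdef]
    rw [hcast] at hcs
    nlinarith [hcs]
  rcases le_or_gt M 0 with hMz | hMpos
  · -- all y i = 0
    have hy : ∀ i ∈ Finset.univ, y i = 0 :=
      (Finset.sum_eq_zero_iff_of_nonpos fun i _ => le_trans (hjle i) hMz).mp h0
    have hr : r = 0 := by
      rw [hrdef]; exact Finset.sum_eq_zero fun i hi => by rw [hy i hi]; ring
    have hq' : q = 0 := by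
      rw [hqdef]; exact Finset.sum_eq_zero fun i hi => by rw [hy i hi]; ring
    rw [hr, hq']; simp
  · -- main case: SOS certificate
    have hsos : 0 ≤ ∑ i, (N * M * y i + q) ^ 2 * (M - y i) :=
      Finset.sum_nonneg fun i _ =>
        mul_nonneg (sq_nonneg _) (sub_nonneg.mpr (hjle i))
    have hexp : ∑ i, (N * M * y i + q) ^ 2 * (M - y i)
        = N ^ 2 * M ^ 3 * q - N ^ 2 * M ^ 2 * r - N * M * q ^ 2 := by
      have hterm : ∀ i : Fin n, (N * M * y i + q) ^ 2 * (M - y i)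
          = -(N ^ 2 * M ^ 2) * (y i) ^ 3 + (N ^ 2 * M ^ 3 - 2 * N * M * q) * (y i) ^ 2
            + (2 * N * M ^ 2 * q - q ^ 2) * y i + q ^ 2 * M := fun i => by ring
      rw [Finset.sum_congr rfl fun i _ => hterm i]
      rw [Finset.sum_add_distrib, Finset.sum_add_distrib, Finset.sum_add_distrib,
        ← Finset.mul_sum, ← Finset.mul_sum, ← Finset.mul_sum, h0,
        Finset.sum_const, Finset.card_univ, Fintype.card_fin, nsmul_eq_mul,
        ← hqdef, ← hrdef, ← hNdef]
      ring
    rw [hexp] at hsos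
    have hmain : N * M * r ≤ N * M ^ 2 * q - q ^ 2 := by
      have hNM : 0 < N * M := mul_pos hN0 hMpos
      nlinarith [hsos, hNM]
    have hMle : M ≤ (N - 1) * m := by
      have h1 : N * M ^ 2 ≤ N * ((N - 1) * m) ^ 2 := by
        nlinarith [hqM, mul_le_mul_of_nonneg_left hq (show (0:ℝ) ≤ N - 1 by linarith)]
      have hM2 : M ^ 2 ≤ ((N - 1) * m) ^ 2 := le_of_mul_le_mul_left (by linarith) hN0
      exact le_of_pow_le_pow_left₀ two_ne_zero (mul_nonneg (by linarith) hm) hM2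
    -- combine
    have hA : 0 ≤ q * ((N - 1) * q - N * M ^ 2) := mul_nonneg hq0 (by linarith)
    have hB : 0 ≤ (N * M * (N - 2)) * (q * ((N - 1) * m - M)) :=
      mul_nonneg (mul_nonneg (mul_nonneg hN0.le hMpos.le) (by linarith))
        (mul_nonneg hq0 (by linarith))
    have hC : 0 ≤ (N - 1) * (N * M ^ 2 * q - q ^ 2 - N * M * r) :=
      mul_nonneg (by linarith) (by linarith)
    have hD : 0 < N * (N - 1) * M := mul_pos (mul_pos hN0 (by linarith)) hMpos
    have hsum : N * (N - 1) * M * 0 ≤ N * (N - 1) * M * (((N - 2)) * m * q - r) := by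
      nlinarith [hA, hB, hC]
    have hfin := le_of_mul_le_mul_left hsum hD
    linarith

/-- Pointwise estimate for the zeroth-order coefficient of the second
variation: for `n ≥ 3`, `x : Fin n → ℝ` with `S_1(x) ≥ 0` and `S_2(x) ≥ 0`,
and `c ≥ 0`,
`S_1(x)·S_2(x) − 3·S_3(x) + c·(n−1)·S_1(x)
  ≥ (2/n)·S_1(x)·(S_2(x) + n(n−1)c/2)`. -/
theorem second_variation_coefficient_estimate (n : ℕ) (hn : 3 ≤ n)
    (x : Fin n → ℝ) (hS1 : 0 ≤ esymm n 1 x) (hS2 : 0 ≤ esymm n 2 x)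
    (c : ℝ) (hc : 0 ≤ c) :
    (2 / (n : ℝ)) * esymm n 1 x * (esymm n 2 x + (n : ℝ) * ((n : ℝ) - 1) * c / 2) ≤
      esymm n 1 x * esymm n 2 x - 3 * esymm n 3 x + c * ((n : ℝ) - 1) * esymm n 1 x := by
  have hN : (3 : ℝ) ≤ (n : ℝ) := by exact_mod_cast hn
  have hN0 : (0 : ℝ) < (n : ℝ) := by linarith
  set N : ℝ := (n : ℝ) with hNdef
  have hNne : N ≠ 0 := ne_of_gt hN0
  set e1 : ℝ := ∑ i, x i with he1
  set p2 : ℝ := ∑ i, (x i) ^ 2 with hp2def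
  set p3 : ℝ := ∑ i, (x i) ^ 3 with hp3def
  have hE1 : esymm n 1 x = e1 := esymm_one x Finset.univ
  have hE2 : esymm n 2 x = (e1 ^ 2 - p2) / 2 := by
    have := esymm_two x Finset.univ; unfold esymm; linarith
  have hE3 : esymm n 3 x = (e1 ^ 3 - 3 * e1 * p2 + 2 * p3) / 6 := by
    have := esymm_three x Finset.univ; unfold esymm; linarith
  set m : ℝ := e1 / N with hmdef
  have hmn : e1 = N * m := by rw [hmdef]; field_simp
  have hm0 : 0 ≤ m := div_nonneg (by rw [hE1] at hS1; exact hS1) hN0.le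
  set y : Fin n → ℝ := fun i => x i - m with hy
  have hy0 : ∑ i, y i = 0 := by
    simp only [hy, Finset.sum_sub_distrib, Finset.sum_const, Finset.card_univ,
      Fintype.card_fin, nsmul_eq_mul, ← he1, ← hNdef]
    rw [hmn]; ring
  set q : ℝ := ∑ i, (y i) ^ 2 with hqdef
  set r : ℝ := ∑ i, (y i) ^ 3 with hrdef
  have hp2y : p2 = q + N * m ^ 2 := by
    have hterm : ∀ i : Fin n, (x i) ^ 2 = (y i) ^ 2 + 2 * m * y i + m ^ 2 := fun i => by
      simp only [hy]; ring
    rw [hp2def, Finset.sum_congr rfl fun i _ => hterm i, Finset.sum_add_distrib,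
      Finset.sum_add_distrib, ← Finset.mul_sum, hy0, Finset.sum_const, Finset.card_univ,
      Fintype.card_fin, nsmul_eq_mul, ← hqdef, ← hNdef]
    ring
  have hp3y : p3 = r + 3 * m * q + N * m ^ 3 := by
    have hterm : ∀ i : Fin n, (x i) ^ 3
        = (y i) ^ 3 + 3 * m * (y i) ^ 2 + 3 * m ^ 2 * y i + m ^ 3 := fun i => by
      simp only [hy]; ring
    rw [hp3def, Finset.sum_congr rfl fun i _ => hterm i, Finset.sum_add_distrib,
      Finset.sum_add_distrib, Finset.sum_add_distrib, ← Finset.mul_sum, ← Finset.mul_sum,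
      hy0, Finset.sum_const, Finset.card_univ, Fintype.card_fin, nsmul_eq_mul,
      ← hqdef, ← hrdef, ← hNdef]
    ring
  have hq : q ≤ N * (N - 1) * m ^ 2 := by
    rw [hE2] at hS2
    nlinarith [hS2, hmn, hp2y]
  have hkey := cubic_key n hn y m hm0 hy0 hq
  rw [← sub_nonneg]
  have hdiff : esymm n 1 x * esymm n 2 x - 3 * esymm n 3 x + c * (N - 1) * esymm n 1 x
      - 2 / N * esymm n 1 x * (esymm n 2 x + N * (N - 1) * c / 2)
      = (N - 2) * m * q - r := by
    rw [hE1, hE2, hE3, hmn, hp2y, hp3y]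
    field_simp
    ring
  rw [hdiff]
  linarith [hkey]
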